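/- Under the setup of the approximate cell problem with comparison, there exist constants K₁, K₂, K₃, K₄ > 0 and C₁, C₂ ∈ ℝ such that the effective Hamiltonian satisfies -K₁·exp(K₂|p|) - C₁ ≥ H̄(p) ≥ -K₃·exp(K₄|p|) - C₂ for all p ∈ ℝⁿ. In particular H̄(p) → -∞ as |p| → ∞. -/

import Mathlib

open MeasureTheory Real Set Filter Metric
open scoped RealInnerProductSpace Topology

private noncomputable def Phi14 (n : ℕ) (J : EuclideanSpace ℝ (Fin n) → ℝ)
    (p : EuclideanSpace ℝ (Fin n)) : ℝ :=
  ∫ y, J y * Real.exp (-⟪y, p⟫)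

theorem stmt14 (n : ℕ) (J : EuclideanSpace ℝ (Fin n) → ℝ)
    (hJc : Continuous J) (hJnn : ∀ y, 0 ≤ J y) (hJsupp : HasCompactSupport J)
    (hJsymm : ∀ y, J (-y) = J y)
    (A r₁ : ℝ) (hA : 0 < A) (hr₁ : 0 < r₁)
    (hJA : ∀ y, ‖y‖ < r₁ → A ≤ J y)
    (Jbar : ℝ) (hJbar : Jbar = ∫ y, J y)
    (c : EuclideanSpace ℝ (Fin n) → ℝ) (hcb : ∃ B, ∀ z, |c z| ≤ B)
    (v : ℝ → EuclideanSpace ℝ (Fin n) → EuclideanSpace ℝ (Fin n) → ℝ)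
    (hvc : ∀ lam > (0:ℝ), ∀ q, Continuous (v lam q))
    (hvb : ∀ lam > (0:ℝ), ∀ q, ∃ B, ∀ z, |v lam q z| ≤ B)
    (hsol : ∀ lam > (0:ℝ), ∀ q z, lam * v lam q z + Jbar -
        (∫ y, J y * Real.exp (-⟪y, q⟫) * Real.exp (v lam q (z - y) - v lam q z)) - c z = 0)
    (hcomp : ∀ lam > (0:ℝ), ∀ q : EuclideanSpace ℝ (Fin n),
      ∀ u w : EuclideanSpace ℝ (Fin n) → ℝ,
      Continuous u → (∃ B, ∀ z, |u z| ≤ B) → Continuous w → (∃ B, ∀ z, |w z| ≤ B) →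
      (∀ z, lam * u z + Jbar -
          (∫ y, J y * Real.exp (-⟪y, q⟫) * Real.exp (u (z - y) - u z)) - c z ≤ 0) →
      (∀ z, 0 ≤ lam * w z + Jbar -
          (∫ y, J y * Real.exp (-⟪y, q⟫) * Real.exp (w (z - y) - w z)) - c z) →
      ∀ z, u z ≤ w z)
    (Hbar : EuclideanSpace ℝ (Fin n) → ℝ)
    (hHbar : ∀ q, TendstoUniformly (fun lam z => lam * v lam q z)
      (fun _ => -Hbar q) (𝓝[>] (0:ℝ))) :
    (∃ K₁ > (0:ℝ), ∃ K₂ > (0:ℝ), ∃ K₃ > (0:ℝ), ∃ K₄ > (0:ℝ), ∃ C₁ C₂ : ℝ,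
      ∀ p : EuclideanSpace ℝ (Fin n),
        Hbar p ≤ -K₁ * Real.exp (K₂ * ‖p‖) - C₁ ∧
        -K₃ * Real.exp (K₄ * ‖p‖) - C₂ ≤ Hbar p) ∧
    Tendsto Hbar (Filter.comap norm Filter.atTop) Filter.atBot := by
  classical
  obtain ⟨B, hB⟩ := hcb
  -- radius of support
  obtain ⟨R₀, hR₀⟩ := hJsupp.isBounded.subset_closedBall (0 : EuclideanSpace ℝ (Fin n))
  set R : ℝ := max R₀ 1 with hR
  have hRpos : (0:ℝ) < R := lt_of_lt_of_le one_pos (le_max_right _ _)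
  have hnorm : ∀ y, J y ≠ 0 → ‖y‖ ≤ R₀ := fun y hy => by
    have hmem : y ∈ tsupport J := subset_tsupport J hy
    have := hR₀ hmem
    simpa [mem_closedBall, dist_zero_right] using this
  -- integrability
  have hcont : ∀ p : EuclideanSpace ℝ (Fin n),
      Continuous fun y => J y * Real.exp (-⟪y, p⟫) := fun p =>
    hJc.mul (Real.continuous_exp.comp (continuous_id.inner continuous_const).neg)
  have hJint : Integrable J := hJc.integrable_of_hasCompactSupport hJsupp
  have hint : ∀ p : EuclideanSpace ℝ (Fin n),
      Integrable fun y => J y * Real.exp (-⟪y, p⟫) := fun p =>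
    (hcont p).integrable_of_hasCompactSupport (hJsupp.mul_right)
  have hJbar0 : 0 ≤ Jbar := hJbar ▸ integral_nonneg hJnn
  -- upper bound on Phi
  have hΦub : ∀ p, Phi14 n J p ≤ Jbar * Real.exp (R * ‖p‖) := by
    intro p
    rw [hJbar, ← integral_mul_const]
    unfold Phi14
    refine integral_mono (hint p) (hJint.mul_const _) fun y => ?_
    by_cases hy : J y = 0
    · simp [hy]
    · have hyR : ‖y‖ ≤ R := le_trans (hnorm y hy) (le_max_left _ _)
      have h1 : -⟪y, p⟫ ≤ R * ‖p‖ := by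
        have h2 : -⟪y, p⟫ ≤ |⟪y, p⟫| := neg_le_abs _
        have h3 : |⟪y, p⟫| ≤ ‖y‖ * ‖p‖ := abs_real_inner_le_norm _ _
        have h4 : ‖y‖ * ‖p‖ ≤ R * ‖p‖ := mul_le_mul_of_nonneg_right hyR (norm_nonneg p)
        linarith
      exact mul_le_mul_of_nonneg_left (Real.exp_le_exp.mpr h1) (hJnn y)
  -- lower bound on Phi
  set m : ℝ := (volume (ball (0 : EuclideanSpace ℝ (Fin n)) (r₁/4))).toReal with hm
  have hmpos : 0 < m := by
    rw [hm]
    exact ENNReal.toReal_pos (measure_ball_pos volume 0 (by positivity)).ne'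
      measure_ball_lt_top.ne
  have hΦlb : ∀ p, A * m * Real.exp (r₁/4 * ‖p‖) ≤ Phi14 n J p := by
    intro p
    set y₀ : EuclideanSpace ℝ (Fin n) := (-(r₁/2) * ‖p‖⁻¹) • p with hy₀
    have hy₀norm : ‖y₀‖ ≤ r₁/2 := by
      rw [hy₀, norm_smul, Real.norm_eq_abs, abs_mul, abs_neg,
        abs_of_nonneg (by positivity : (0:ℝ) ≤ r₁/2), abs_inv, abs_norm]
      rcases eq_or_ne p 0 with h | h
      · simp [h]
        positivity
      · have hp : (0:ℝ) < ‖p‖ := norm_pos_iff.mpr h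
        rw [mul_assoc, inv_mul_cancel₀ hp.ne', mul_one]
    have hy₀inner : ⟪y₀, p⟫ = -(r₁/2) * ‖p‖ := by
      rw [hy₀, real_inner_smul_left, real_inner_self_eq_norm_mul_norm]
      rcases eq_or_ne p 0 with h | h
      · simp [h]
      · have hp : ‖p‖ ≠ 0 := norm_ne_zero_iff.mpr h
        field_simp
    have hball : ∀ y ∈ ball y₀ (r₁/4),
        A * Real.exp (r₁/4 * ‖p‖) ≤ J y * Real.exp (-⟪y, p⟫) := by
      intro y hy
      rw [mem_ball, dist_eq_norm] at hy
      have hyn : ‖y‖ ≤ ‖y - y₀‖ + ‖y₀‖ := by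
        have := norm_add_le (y - y₀) y₀
        simpa using this
      have hJy : A ≤ J y := hJA y (by linarith)
      have hinner : r₁/4 * ‖p‖ ≤ -⟪y, p⟫ := by
        have h3 : ⟪y - y₀, p⟫ ≤ ‖y - y₀‖ * ‖p‖ := real_inner_le_norm _ _
        rw [inner_sub_left, hy₀inner] at h3
        have h5 : ‖y - y₀‖ * ‖p‖ ≤ r₁/4 * ‖p‖ :=
          mul_le_mul_of_nonneg_right hy.le (norm_nonneg p)
        linarith
      exact mul_le_mul hJy (Real.exp_le_exp.mpr hinner) (Real.exp_pos _).le
        (le_trans hA.le hJy)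
    calc A * m * Real.exp (r₁/4 * ‖p‖)
        = ∫ _ in ball y₀ (r₁/4), A * Real.exp (r₁/4 * ‖p‖) := by
          rw [setIntegral_const, measureReal_def, Measure.addHaar_ball_center volume y₀, smul_eq_mul, ← hm]
          ring
      _ ≤ ∫ y in ball y₀ (r₁/4), J y * Real.exp (-⟪y, p⟫) := by
          refine setIntegral_mono_on ?_ ((hint p).integrableOn) measurableSet_ball hball
          exact integrableOn_const measure_ball_lt_top.ne
      _ ≤ Phi14 n J p :=
          setIntegral_le_integral (hint p)
            (ae_of_all _ fun y => mul_nonneg (hJnn y) (Real.exp_pos _).le)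
  -- comparison with constants
  have key : ∀ (p : EuclideanSpace ℝ (Fin n)) (lam : ℝ), 0 < lam →
      Phi14 n J p - Jbar - B ≤ lam * v lam p 0 ∧
      lam * v lam p 0 ≤ Phi14 n J p - Jbar + B := by
    intro p lam hlam
    have hlam' : lam ≠ 0 := ne_of_gt hlam
    constructor
    · -- lower bound
      set Cl : ℝ := (Phi14 n J p - Jbar - B) / lam with hCl
      have hintc : (∫ y, J y * Real.exp (-⟪y, p⟫) * Real.exp (Cl - Cl)) = Phi14 n J p := by
        unfold Phi14
        simp only [sub_self, Real.exp_zero, mul_one]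
      have hlc : lam * Cl = Phi14 n J p - Jbar - B := by
        rw [hCl]; field_simp
      have hsub : ∀ z : EuclideanSpace ℝ (Fin n),
          lam * Cl + Jbar - (∫ y, J y * Real.exp (-⟪y, p⟫) * Real.exp (Cl - Cl)) - c z ≤ 0 := by
        intro z
        have hcz : -B ≤ c z := neg_le_of_abs_le (hB z)
        rw [hintc, hlc]
        linarith
      have h := hcomp lam hlam p (fun _ => Cl) (v lam p)
        continuous_const ⟨|Cl|, fun _ => le_rfl⟩ (hvc lam hlam p) (hvb lam hlam p)
        (fun z => hsub z) (fun z => (hsol lam hlam p z).ge)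
      calc Phi14 n J p - Jbar - B = lam * Cl := hlc.symm
        _ ≤ lam * v lam p 0 := mul_le_mul_of_nonneg_left (h 0) hlam.le
    · -- upper bound
      set Cu : ℝ := (Phi14 n J p - Jbar + B) / lam with hCu
      have hintc : (∫ y, J y * Real.exp (-⟪y, p⟫) * Real.exp (Cu - Cu)) = Phi14 n J p := by
        unfold Phi14
        simp only [sub_self, Real.exp_zero, mul_one]
      have hlc : lam * Cu = Phi14 n J p - Jbar + B := by
        rw [hCu]; field_simp
      have hsup : ∀ z : EuclideanSpace ℝ (Fin n),
          0 ≤ lam * Cu + Jbar - (∫ y, J y * Real.exp (-⟪y, p⟫) * Real.exp (Cu - Cu)) - c z := by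
        intro z
        have hcz : c z ≤ B := le_of_abs_le (hB z)
        rw [hintc, hlc]
        linarith
      have h := hcomp lam hlam p (v lam p) (fun _ => Cu)
        (hvc lam hlam p) (hvb lam hlam p) continuous_const ⟨|Cu|, fun _ => le_rfl⟩
        (fun z => (hsol lam hlam p z).le) (fun z => hsup z)
      calc lam * v lam p 0 ≤ lam * Cu := mul_le_mul_of_nonneg_left (h 0) hlam.le
        _ = Phi14 n J p - Jbar + B := hlc
  -- pass to the limit
  have hlim : ∀ p, Phi14 n J p - Jbar - B ≤ -Hbar p ∧ -Hbar p ≤ Phi14 n J p - Jbar + B := by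
    intro p
    have hten : Tendsto (fun lam => lam * v lam p 0) (𝓝[>] (0:ℝ)) (𝓝 (-Hbar p)) :=
      (hHbar p).tendsto_at 0
    have hev : ∀ᶠ lam in 𝓝[>] (0:ℝ), lam ∈ Ioi (0:ℝ) := eventually_mem_nhdsWithin
    exact ⟨ge_of_tendsto hten (hev.mono fun lam hl => (key p lam hl).1),
      le_of_tendsto hten (hev.mono fun lam hl => (key p lam hl).2)⟩
  have hub : ∀ p, Hbar p ≤ -(A * m) * Real.exp (r₁/4 * ‖p‖) - (-(Jbar + B)) := by
    intro p
    have h1 := (hlim p).1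
    have h2 := hΦlb p
    linarith
  refine ⟨⟨A * m, mul_pos hA hmpos, r₁/4, by positivity, Jbar + 1, by linarith, R, hRpos,
    -(Jbar + B), B - Jbar, fun p => ⟨hub p, ?_⟩⟩, ?_⟩
  · have h1 := (hlim p).2
    have h2 := hΦub p
    have h3 := (Real.exp_pos (R * ‖p‖)).le
    nlinarith
  · have h1 : Tendsto (fun p : EuclideanSpace ℝ (Fin n) => ‖p‖)
        (Filter.comap norm Filter.atTop) atTop := tendsto_comap
    have h3 : Tendsto (fun x : ℝ => Real.exp (r₁/4 * x)) atTop atTop :=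
      Real.tendsto_exp_atTop.comp (Tendsto.const_mul_atTop (by positivity) tendsto_id)
    have h4 : Tendsto (fun x : ℝ => -(A * m) * Real.exp (r₁/4 * x)) atTop atBot :=
      Tendsto.const_mul_atTop_of_neg (by nlinarith : -(A * m) < 0) h3
    have h5 : Tendsto (fun x : ℝ => -(A * m) * Real.exp (r₁/4 * x) - (-(Jbar + B)))
        atTop atBot := by
      simpa [sub_eq_add_neg] using tendsto_atBot_add_const_right atTop (-(-(Jbar + B))) h4
    exact tendsto_atBot_mono' _ (Eventually.of_forall fun p => hub p) (h5.comp h1)
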